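/- Let A be a unital associative algebra over ℂ. Consider the short exact sequence of cochain complexes 0 → (C_λ^*(A), b) → (C^*(A), b) → (C^*(A)/C_λ^*(A), b) → 0 given by the inclusion of the cyclic complex into the Hochschild complex. Then the connecting homomorphism δ : HC^{n−1}(A) → H^n(C/C_λ) of the associated long exact sequence is an isomorphism for every n ≥ 1. -/

import Mathlib

set_option linter.unusedSectionVars false
set_option linter.unusedTactic false
set_option maxHeartbeats 1000000


noncomputable section
namespace NCG

abbrev Cochain (A : Type) (n : ℕ) : Type := (Fin (n + 1) → A) → ℂ

variable {A : Type} [Ring A] [Algebra ℂ A]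

def face {n : ℕ} (a : Fin (n + 2) → A) (i : Fin (n + 1)) : Fin (n + 1) → A :=
  fun j => if j < i then a j.castSucc else if j = i then a j.castSucc * a j.succ else a j.succ

def cyclicFace {n : ℕ} (a : Fin (n + 2) → A) : Fin (n + 1) → A :=
  fun j => if j = 0 then a (Fin.last (n + 1)) * a 0 else a j.castSucc

def bP {n : ℕ} (φ : Cochain A n) : Cochain A (n + 1) :=
  fun a => ∑ i : Fin (n + 1), (-1 : ℂ) ^ (i : ℕ) * φ (face a i)

def bH {n : ℕ} (φ : Cochain A n) : Cochain A (n + 1) :=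
  fun a => bP φ a + (-1 : ℂ) ^ (n + 1) * φ (cyclicFace a)

def lam {n : ℕ} (φ : Cochain A n) : Cochain A n :=
  fun a => (-1 : ℂ) ^ n * φ (fun j => a (j - 1))

def opN {n : ℕ} (φ : Cochain A n) : Cochain A n :=
  fun a => ∑ k ∈ Finset.range (n + 1), (lam^[k] φ) a

def opS {n : ℕ} (φ : Cochain A (n + 1)) : Cochain A n :=
  fun a => (-1 : ℂ) ^ n * φ (Fin.snoc a 1)

def opB0 {n : ℕ} (φ : Cochain A (n + 1)) : Cochain A n :=
  fun a => φ (Fin.cons 1 a) - (-1 : ℂ) ^ (n + 1) * φ (Fin.snoc a 1)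

def opB {n : ℕ} (φ : Cochain A (n + 1)) : Cochain A n := opN (opB0 φ)

def IsML {n : ℕ} (φ : Cochain A n) : Prop :=
  ∃ F : MultilinearMap ℂ (fun _ : Fin (n + 1) => A) ℂ, ⇑F = φ

/-! ### auxiliary -/

open Fin.NatCast

def rot {m : ℕ} (k : ℕ) (a : Fin (m + 1) → A) : Fin (m + 1) → A :=
  fun j => a (j - (k : Fin (m + 1)))

def allFace {n : ℕ} (a : Fin (n + 2) → A) (i : ℕ) : Fin (n + 1) → A :=
  if h : i < n + 1 then face a ⟨i, h⟩ else cyclicFace a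

def hmt {m : ℕ} (θ : Cochain A (m + 1)) : Cochain A m :=
  fun a => θ (Fin.cons 1 a)

lemma npow_congr {p q : ℕ} (h : p % 2 = q % 2) : (-1 : ℂ) ^ p = (-1) ^ q := by
  rw [neg_one_pow_eq_pow_mod_two, h, ← neg_one_pow_eq_pow_mod_two]

lemma sub_one_val {m : ℕ} (x : Fin (m + 1)) :
    ((x - 1).val) = if x.val = 0 then m else x.val - 1 := by
  cases m with
  | zero =>
    have hx := x.isLt
    rw [Fin.sub_def]
    simp [Nat.mod_one]
  | succ m' =>
    have h0 : ((x - 1).val) = (m' + 2 - ((1 : Fin (m' + 2)) : ℕ) + x.val) % (m' + 2) := by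
      rw [Fin.sub_def]
    rw [h0, Fin.val_one]
    rcases Nat.eq_zero_or_pos x.val with hx | hx
    · rw [hx, if_pos rfl]
      have h1 : m' + 2 - 1 + 0 = m' + 1 := by omega
      rw [h1, Nat.mod_eq_of_lt (by omega)]
    · rw [if_neg (by omega)]
      have h2 : m' + 2 - 1 + x.val = (x.val - 1) + (m' + 2) := by omega
      rw [h2, Nat.add_mod_right, Nat.mod_eq_of_lt (by omega)]

lemma rot_zero {m : ℕ} (a : Fin (m + 1) → A) : rot 0 a = a := by
  funext j; simp [rot]

lemma rot_rot {m : ℕ} (j k : ℕ) (a : Fin (m + 1) → A) :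
    rot j (rot k a) = rot (j + k) a := by
  funext i
  simp [rot, Nat.cast_add, sub_sub, add_comm]

lemma rot_self {m : ℕ} (a : Fin (m + 1) → A) : rot (m + 1) a = a := by
  funext j; simp [rot, Fin.natCast_self]

lemma rot_one {m : ℕ} (a : Fin (m + 1) → A) : rot 1 a = fun j => a (j - 1) := by
  funext j; simp [rot]

lemma lam_eval {n : ℕ} (φ : Cochain A n) (a : Fin (n + 1) → A) :
    lam φ a = (-1 : ℂ) ^ n * φ (rot 1 a) := by
  rw [rot_one]; rfl

lemma lam_iter {n : ℕ} (k : ℕ) (φ : Cochain A n) (a : Fin (n + 1) → A) :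
    (lam^[k] φ) a = (-1 : ℂ) ^ (n * k) * φ (rot k a) := by
  induction k generalizing a with
  | zero => simp [rot_zero]
  | succ k ih =>
    rw [Function.iterate_succ_apply', lam_eval, ih (rot 1 a), rot_rot]
    rw [← mul_assoc, ← pow_add]
    rw [npow_congr (p := n + n * k) (q := n * (k + 1)) (by
      have h : n * (k + 1) = n + n * k := by ring
      rw [h])]

lemma opN_eval {n : ℕ} (φ : Cochain A n) (a : Fin (n + 1) → A) :
    opN φ a = ∑ m ∈ Finset.range (n + 1), (-1 : ℂ) ^ (n * m) * φ (rot m a) := by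
  unfold opN; exact Finset.sum_congr rfl fun m _ => lam_iter m φ a

lemma bP_eval {n : ℕ} (φ : Cochain A n) (a : Fin (n + 2) → A) :
    bP φ a = ∑ i ∈ Finset.range (n + 1), (-1 : ℂ) ^ i * φ (allFace a i) := by
  rw [← Fin.sum_univ_eq_sum_range (fun i => (-1 : ℂ) ^ i * φ (allFace a i)) (n + 1)]
  refine Finset.sum_congr rfl fun i _ => ?_
  congr 1
  simp [allFace, i.isLt, Fin.eta]

lemma bH_eval {n : ℕ} (φ : Cochain A n) (a : Fin (n + 2) → A) :
    bH φ a = ∑ i ∈ Finset.range (n + 2), (-1 : ℂ) ^ i * φ (allFace a i) := by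
  rw [Finset.sum_range_succ, ← bP_eval]
  have : allFace a (n + 1) = cyclicFace a := by simp [allFace]
  rw [this]; rfl

lemma apply_congr {m : ℕ} (a : Fin m → A) {x y : Fin m} (h : (x : ℕ) = (y : ℕ)) : a x = a y :=
  congrArg a (Fin.ext h)

lemma oneStep {n : ℕ} (a : Fin (n + 2) → A) (i : ℕ) (hi : i ≤ n + 1) :
    allFace (rot 1 a) i = if i = 0 then allFace a (n + 1) else rot 1 (allFace a (i - 1)) := by
  funext j
  simp only [allFace]
  split_ifs <;>
    first
    | (exfalso; omega)
    | (simp only [face, cyclicFace, rot, Nat.cast_one, Fin.lt_def, Fin.ext_iff, Fin.val_zero,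
        Fin.coe_castSucc, Fin.val_succ, Fin.val_last, Fin.val_mk, sub_one_val]
       split_ifs <;>
         first
         | (exfalso; first | omega | (simp_all; done))
         | rfl
         | (refine apply_congr a ?_
            simp only [sub_one_val, Fin.coe_castSucc, Fin.val_succ, Fin.val_last, Fin.val_zero,
              Fin.val_mk]
            first | omega | (split_ifs <;> first | omega | (simp_all; done)))
         | ((refine congrArg₂ HMul.hMul (apply_congr a ?_) (apply_congr a ?_)) <;>
            (simp only [sub_one_val, Fin.coe_castSucc, Fin.val_succ, Fin.val_last, Fin.val_zero,
               Fin.val_mk]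
             first | omega | (split_ifs <;> first | omega | (simp_all; done)))))

lemma master {n : ℕ} (a : Fin (n + 2) → A) :
    ∀ k, k ≤ n + 1 → ∀ i, i ≤ n + 1 →
    allFace (rot k a) i =
      if k ≤ i then rot k (allFace a (i - k)) else rot (k - 1) (allFace a (n + 2 + i - k)) := by
  intro k
  induction k with
  | zero =>
    intro _ i _
    rw [if_pos (Nat.zero_le i), rot_zero, Nat.sub_zero, rot_zero]
  | succ k ih =>
    intro hk i hi
    have h1 : rot (k + 1) a = rot 1 (rot k a) := by rw [rot_rot, Nat.add_comm 1 k]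
    rw [h1, oneStep (rot k a) i hi]
    rcases Nat.eq_zero_or_pos i with hi0 | hip
    · subst hi0
      rw [if_pos rfl, if_neg (by omega : ¬ k + 1 ≤ 0)]
      rw [ih (by omega) (n + 1) (by omega), if_pos (by omega : k ≤ n + 1)]
      have e1 : n + 2 + 0 - (k + 1) = n + 1 - k := by omega
      have e2 : k + 1 - 1 = k := by omega
      rw [e1, e2]
    · rw [if_neg (by omega : ¬ i = 0), ih (by omega) (i - 1) (by omega)]
      rcases le_or_gt (k + 1) i with hle | hlt
      · rw [if_pos (by omega : k ≤ i - 1), if_pos (by omega : k + 1 ≤ i), rot_rot]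
        have e1 : 1 + k = k + 1 := by omega
        have e2 : i - 1 - k = i - (k + 1) := by omega
        rw [e1, e2]
      · rw [if_neg (by omega : ¬ k ≤ i - 1), if_neg (by omega : ¬ k + 1 ≤ i), rot_rot]
        have e1 : 1 + (k - 1) = k := by omega
        have e2 : n + 2 + (i - 1) - k = n + 2 + i - (k + 1) := by omega
        have e3 : k + 1 - 1 = k := by omega
        rw [e1, e2, e3]

lemma face_cons_zero {m : ℕ} (a : Fin (m + 2) → A) : face (Fin.cons 1 a) 0 = a := by
  funext j
  simp only [face]
  rw [if_neg (Fin.not_lt_zero j)]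
  by_cases hj : j = 0
  · subst hj
    rw [if_pos rfl]
    have h1 : (Fin.castSucc (0 : Fin (m + 2))) = 0 := rfl
    rw [h1, Fin.cons_zero, one_mul]
    have h2 : Fin.succ (0 : Fin (m + 2)) = Fin.succ 0 := rfl
    rw [Fin.cons_succ]
  · rw [if_neg hj, Fin.cons_succ]

lemma face_cons_succ {m : ℕ} (a : Fin (m + 2) → A) (i : Fin (m + 1)) :
    face (Fin.cons 1 a) i.succ = Fin.cons 1 (face a i) := by
  funext j
  induction j using Fin.cases with
  | zero =>
    simp only [face, Fin.cons_zero]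
    rw [if_pos i.succ_pos]
    rfl
  | succ k =>
    simp only [face, Fin.cons_succ]
    rw [show (Fin.castSucc k.succ) = (Fin.castSucc k).succ from (Fin.succ_castSucc k).symm]
    simp only [Fin.cons_succ]
    by_cases h1 : k < i
    · rw [if_pos (by exact Fin.succ_lt_succ_iff.mpr h1), if_pos h1]
    · rw [if_neg (by simpa using h1)]
      by_cases h2 : k = i
      · rw [if_pos (by rw [h2]), if_neg h1, if_pos h2]
      · rw [if_neg (by simpa [Fin.succ_inj] using h2), if_neg h1, if_neg h2]

lemma homotopy {m : ℕ} (θ : Cochain A (m + 1)) (a : Fin (m + 2) → A) :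
    bP (hmt θ) a + hmt (bP θ) a = θ a := by
  have h1 : hmt (bP θ) a = bP θ (Fin.cons 1 a) := rfl
  have h2 : bP θ (Fin.cons 1 a)
      = θ a + ∑ i : Fin (m + 1), (-1 : ℂ) ^ ((i : ℕ) + 1) * θ (Fin.cons 1 (face a i)) := by
    show (∑ i : Fin (m + 2), (-1 : ℂ) ^ (i : ℕ) * θ (face (Fin.cons 1 a) i)) = _
    rw [Fin.sum_univ_succ]
    congr 1
    · rw [face_cons_zero]; simp
    · exact Finset.sum_congr rfl fun i _ => by rw [face_cons_succ]; simp [Fin.val_succ]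
  have h3 : bP (hmt θ) a = ∑ i : Fin (m + 1), (-1 : ℂ) ^ (i : ℕ) * θ (Fin.cons 1 (face a i)) := rfl
  rw [h1, h2, h3]
  have h4 : ∀ i : Fin (m + 1), (-1 : ℂ) ^ ((i : ℕ) + 1) * θ (Fin.cons 1 (face a i))
      = -((-1 : ℂ) ^ (i : ℕ) * θ (Fin.cons 1 (face a i))) := by
    intro i; rw [pow_succ]; ring
  rw [Finset.sum_congr rfl fun i _ => h4 i, Finset.sum_neg_distrib]
  ring

lemma lam_sub {n : ℕ} (f g : Cochain A n) : lam (f - g) = lam f - lam g := by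
  funext a; simp [lam, Pi.sub_apply, mul_sub]

lemma lam_zero {n : ℕ} : lam (0 : Cochain A n) = 0 := by
  funext a; simp [lam]

lemma bP_sub {n : ℕ} (f g : Cochain A n) : bP (f - g) = bP f - bP g := by
  funext a
  simp [bP_eval, Pi.sub_apply, mul_sub, Finset.sum_sub_distrib]

lemma bH_zero {n : ℕ} : bH (0 : Cochain A n) = 0 := by
  funext a; simp [bH, bP]

lemma opN_sub {n : ℕ} (f g : Cochain A n) : opN (f - g) = opN f - opN g := by
  funext a
  simp [opN_eval, Pi.sub_apply, mul_sub, Finset.sum_sub_distrib]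

lemma hmt_zero {m : ℕ} : hmt (0 : Cochain A (m + 1)) = 0 := by
  funext a; simp [hmt]

lemma shift_sum {M : Type} [AddCommGroup M] (g : ℕ → M) (n : ℕ) (h : g (n + 1) = g 0) :
    ∑ m ∈ Finset.range (n + 1), g (m + 1) = ∑ m ∈ Finset.range (n + 1), g m := by
  have h5 := Finset.sum_range_succ' g (n + 1)
  have h6 := Finset.sum_range_succ g (n + 1)
  have h7 := h5.symm.trans h6
  rw [h] at h7
  exact add_right_cancel h7

lemma opN_lam {n : ℕ} (φ : Cochain A n) : opN (lam φ) = opN φ := by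
  funext a
  rw [opN_eval, opN_eval]
  have key : ∀ m ∈ Finset.range (n + 1), (-1 : ℂ) ^ (n * m) * (lam φ) (rot m a)
      = (-1 : ℂ) ^ (n * (m + 1)) * φ (rot (m + 1) a) := by
    intro m _
    rw [lam_eval, rot_rot, Nat.add_comm 1 m, show n * (m + 1) = n * m + n from by ring,
      pow_add]
    ring
  rw [Finset.sum_congr rfl key]
  refine shift_sum (fun m => (-1 : ℂ) ^ (n * m) * φ (rot m a)) n ?_
  simp only [rot_self, rot_zero, Nat.mul_zero, pow_zero, one_mul]
  rw [Even.neg_one_pow (Nat.even_mul_succ_self n), one_mul]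

lemma lam_opN {n : ℕ} (φ : Cochain A n) : lam (opN φ) = opN φ := by
  funext a
  rw [lam_eval, opN_eval, opN_eval, Finset.mul_sum]
  have key : ∀ m ∈ Finset.range (n + 1),
      (-1 : ℂ) ^ n * ((-1 : ℂ) ^ (n * m) * φ (rot m (rot 1 a)))
        = (-1 : ℂ) ^ (n * (m + 1)) * φ (rot (m + 1) a) := by
    intro m _
    rw [rot_rot, show n * (m + 1) = n * m + n from by ring, pow_add]
    ring
  rw [Finset.sum_congr rfl key]
  refine shift_sum (fun m => (-1 : ℂ) ^ (n * m) * φ (rot m a)) n ?_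
  simp only [rot_self, rot_zero, Nat.mul_zero, pow_zero, one_mul]
  rw [Even.neg_one_pow (Nat.even_mul_succ_self n), one_mul]

lemma lam_bH {n : ℕ} (φ : Cochain A n) (a : Fin (n + 2) → A) :
    lam (bH φ) a = bP (lam φ) a + (-1 : ℂ) ^ (n + 1) * φ (cyclicFace a) := by
  rw [lam_eval, bH_eval, Finset.sum_range_succ']
  have e0 : allFace (rot 1 a) 0 = cyclicFace a := by
    rw [oneStep a 0 (by omega), if_pos rfl]
    simp [allFace]
  have estep : ∀ i ∈ Finset.range (n + 1),
      (-1 : ℂ) ^ (i + 1) * φ (allFace (rot 1 a) (i + 1))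
        = (-1 : ℂ) ^ (i + 1) * φ (rot 1 (allFace a i)) := by
    intro i hi
    simp only [Finset.mem_range] at hi
    rw [oneStep a (i + 1) (by omega), if_neg (by omega)]
    simp
  rw [Finset.sum_congr rfl estep, e0]
  rw [bP_eval]
  have hlam : ∀ i ∈ Finset.range (n + 1),
      (-1 : ℂ) ^ i * (lam φ) (allFace a i)
        = (-1 : ℂ) ^ i * ((-1 : ℂ) ^ n * φ (rot 1 (allFace a i))) := by
    intro i _; rw [lam_eval]
  rw [Finset.sum_congr rfl hlam, mul_add, Finset.mul_sum]
  congr 1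
  · refine Finset.sum_congr rfl fun i _ => ?_
    rw [← mul_assoc, ← pow_add, ← mul_assoc, ← pow_add]
    congr 1
    refine npow_congr ?_
    omega
  · rw [pow_zero, one_mul]

lemma bH_sub_lam {n : ℕ} (φ : Cochain A n) : bH φ - lam (bH φ) = bP (φ - lam φ) := by
  funext a
  have h := lam_bH φ a
  have hbP := congrFun (bP_sub φ (lam φ)) a
  have hb : bH φ a = bP φ a + (-1 : ℂ) ^ (n + 1) * φ (cyclicFace a) := rfl
  rw [Pi.sub_apply, h, hbP, Pi.sub_apply, hb]
  ring

lemma bH_opN {n : ℕ} (ψ : Cochain A n) : bH (opN ψ) = opN (bP ψ) := by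
  funext a
  rw [bH_eval, opN_eval]
  have hL : ∀ i ∈ Finset.range (n + 2), (-1 : ℂ) ^ i * (opN ψ) (allFace a i)
      = ∑ m ∈ Finset.range (n + 1), (-1 : ℂ) ^ (i + n * m) * ψ (rot m (allFace a i)) := by
    intro i _
    rw [opN_eval, Finset.mul_sum]
    exact Finset.sum_congr rfl fun m _ => by rw [← mul_assoc, ← pow_add]
  have hR : ∀ k ∈ Finset.range (n + 2), (-1 : ℂ) ^ ((n + 1) * k) * (bP ψ) (rot k a)
      = ∑ i ∈ Finset.range (n + 1), (-1 : ℂ) ^ ((n + 1) * k + i) * ψ (allFace (rot k a) i) := by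
    intro k _
    rw [bP_eval, Finset.mul_sum]
    exact Finset.sum_congr rfl fun i _ => by rw [← mul_assoc, ← pow_add]
  rw [Finset.sum_congr rfl hL, Finset.sum_congr rfl hR]
  rw [← Finset.sum_product' (s := Finset.range (n + 2)) (t := Finset.range (n + 1))
    (f := fun i m => (-1 : ℂ) ^ (i + n * m) * ψ (rot m (allFace a i)))]
  rw [← Finset.sum_product' (s := Finset.range (n + 2)) (t := Finset.range (n + 1))
    (f := fun k i => (-1 : ℂ) ^ ((n + 1) * k + i) * ψ (allFace (rot k a) i))]
  refine Finset.sum_nbij'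
    (i := fun p => if p.1 + p.2 ≤ n then (p.2, p.1 + p.2) else (p.2 + 1, p.1 + p.2 - (n + 1)))
    (j := fun p => if p.1 ≤ p.2 then (p.2 - p.1, p.1) else (n + 2 + p.2 - p.1, p.1 - 1))
    ?_ ?_ ?_ ?_ ?_
  · intro p hp
    simp only [Finset.mem_product, Finset.mem_range] at *
    split_ifs <;> constructor <;> omega
  · intro p hp
    simp only [Finset.mem_product, Finset.mem_range] at *
    split_ifs <;> constructor <;> omega
  · rintro ⟨x, y⟩ hp
    simp only [Finset.mem_product, Finset.mem_range] at hp
    by_cases hc : x + y ≤ n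
    · simp only [hc, ↓reduceIte]
      rw [if_pos (by omega : y ≤ x + y)]
      simp only [Prod.mk.injEq]
      constructor <;> first | trivial | omega
    · simp only [hc, ↓reduceIte]
      rw [if_neg (by omega : ¬ y + 1 ≤ x + y - (n + 1))]
      simp only [Prod.mk.injEq]
      constructor <;> first | trivial | omega
  · rintro ⟨k, i'⟩ hp
    simp only [Finset.mem_product, Finset.mem_range] at hp
    by_cases hc : k ≤ i'
    · simp only [hc, ↓reduceIte]
      rw [if_pos (by omega : i' - k + k ≤ n)]
      simp only [Prod.mk.injEq]
      constructor <;> first | trivial | omega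
    · simp only [hc, ↓reduceIte]
      rw [if_neg (by omega : ¬ n + 2 + i' - k + (k - 1) ≤ n)]
      simp only [Prod.mk.injEq]
      constructor <;> first | trivial | omega
  · rintro ⟨i, m⟩ hp
    simp only [Finset.mem_product, Finset.mem_range] at hp
    by_cases hc : i + m ≤ n
    · simp only [hc, ↓reduceIte]
      rw [master a m (by omega) (i + m) (by omega), if_pos (by omega : m ≤ i + m),
        Nat.add_sub_cancel]
      congr 1
      refine npow_congr ?_
      rw [show (n + 1) * m + (i + m) = n * m + (i + 2 * m) from by ring]
      generalize n * m = t
      omega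
    · simp only [hc, ↓reduceIte]
      rw [master a (m + 1) (by omega) (i + m - (n + 1)) (by omega),
        if_neg (by omega : ¬ m + 1 ≤ i + m - (n + 1))]
      rw [show n + 2 + (i + m - (n + 1)) - (m + 1) = i from by omega,
        show m + 1 - 1 = m from by omega]
      congr 1
      refine npow_congr ?_
      rw [show (n + 1) * (m + 1) = n * m + n + m + 1 from by ring]
      generalize n * m = t
      omega

lemma IsML_zero {n : ℕ} : IsML (0 : Cochain A n) :=
  ⟨0, by funext a; simp⟩

lemma IsML_sub {n : ℕ} {f g : Cochain A n} (hf : IsML f) (hg : IsML g) : IsML (f - g) := by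
  obtain ⟨F, hF⟩ := hf; obtain ⟨G, hG⟩ := hg
  exact ⟨F - G, by funext a; simp [← hF, ← hG]⟩

lemma IsML_addFun {n : ℕ} {f g : Cochain A n} (hf : IsML f) (hg : IsML g) :
    IsML (fun a => f a + g a) := by
  obtain ⟨F, hF⟩ := hf; obtain ⟨G, hG⟩ := hg
  exact ⟨F + G, by funext a; simp [← hF, ← hG]⟩

lemma IsML_lam {n : ℕ} {f : Cochain A n} (hf : IsML f) : IsML (lam f) := by
  obtain ⟨F, hF⟩ := hf
  refine ⟨((-1 : ℂ) ^ n) • F.domDomCongr (Equiv.subRight (1 : Fin (n + 1))), ?_⟩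
  funext a
  simp [MultilinearMap.domDomCongr_apply, Equiv.subRight_apply, lam, ← hF, smul_eq_mul]

lemma IsML_hmt {m : ℕ} {θ : Cochain A (m + 1)} (hθ : IsML θ) : IsML (hmt θ) := by
  obtain ⟨F, hF⟩ := hθ
  exact ⟨F.curryLeft 1, by funext a; simp [MultilinearMap.curryLeft_apply, hmt, ← hF]⟩

lemma IsML_sum {n : ℕ} (m : ℕ) (f : ℕ → Cochain A n) (hf : ∀ k, IsML (f k)) :
    IsML (fun a => ∑ k ∈ Finset.range m, f k a) := by
  induction m with
  | zero => exact ⟨0, by funext a; simp⟩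
  | succ m ih =>
    have h : (fun a => ∑ k ∈ Finset.range (m + 1), f k a)
        = fun a => (∑ k ∈ Finset.range m, f k a) + f m a := by
      funext a; rw [Finset.sum_range_succ]
    rw [h]
    exact IsML_addFun ih (hf m)

lemma IsML_lam_iter {n : ℕ} (k : ℕ) {f : Cochain A n} (hf : IsML f) : IsML (lam^[k] f) := by
  induction k with
  | zero => exact hf
  | succ k ih => rw [Function.iterate_succ_apply']; exact IsML_lam ih

lemma IsML_opN {n : ℕ} {f : Cochain A n} (hf : IsML f) : IsML (opN f) :=
  IsML_sum (n + 1) (fun k => lam^[k] f) (fun k => IsML_lam_iter k hf)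

lemma deg0 (f : Cochain A 0) (h : bP f = 0) : f = 0 := by
  funext b
  have h1 := congrFun h (Fin.cons (b 0) (fun _ => (1 : A)))
  have h2 : face (Fin.cons (b 0) (fun _ => (1 : A))) 0 = b := by
    funext j
    have hj : j = 0 := Fin.ext (by have := j.isLt; omega)
    subst hj
    simp [face, Fin.cons_zero, Fin.cons_succ]
  have h3 : bP f (Fin.cons (b 0) (fun _ => (1 : A))) = f b := by
    show (∑ i : Fin 1, (-1 : ℂ) ^ (i : ℕ) * f (face (Fin.cons (b 0) fun _ => (1 : A)) i)) = f b
    rw [Fin.sum_univ_one, h2]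
    simp
  rw [h3] at h1
  simpa using h1

lemma chi_eq {n : ℕ} (χ : Cochain A (n + 1)) (η : Cochain A n)
    (hc : lam (χ - bH η) = χ - bH η) : χ - lam χ = bP (η - lam η) := by
  have h1 : (χ - bH η) - lam (χ - bH η) = 0 := by rw [hc, sub_self]
  have h3 : bH η - lam (bH η) = bP (η - lam η) := bH_sub_lam η
  calc χ - lam χ = ((χ - bH η) - lam (χ - bH η)) + (bH η - lam (bH η)) := by
        rw [lam_sub]; abel
    _ = bP (η - lam η) := by rw [h1, h3, zero_add]

/-- Connes' connecting homomorphism `δ : HCⁿ⁻¹(A) → Hⁿ(C/C_λ)` (arising from the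
short exact sequence `0 → C/C_λ → (C, b') → C_λ → 0`, with `Hᵇ'(C) = 0`) is an
isomorphism for every `n ≥ 1`.  Stated elementwise (with source degree written `n`,
target degree `n + 1`): given a cyclic cocycle `φ`, choose `ψ` with `Nψ = φ` and
`χ` with `(1 - λ)χ = b'ψ`; then `δ[φ] = [χ]` in `Hⁿ⁺¹(C/C_λ)`.  The first
conjunct is surjectivity of `δ`, the remaining two are injectivity (in target
degrees `1` and `≥ 2`, i.e. source degrees `0` and `≥ 1`). -/
theorem connecting_hom_cyclic_to_quotient_is_iso (A : Type) [Ring A] [Algebra ℂ A] :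
    -- surjectivity: every cocycle class of `C/C_λ` is `δ` of a cyclic cocycle class
    (∀ (n : ℕ) (χ' : Cochain A (n + 1)), IsML χ' → lam (bH χ') = bH χ' →
      ∃ (φ ψ η : Cochain A n) (χ : Cochain A (n + 1)),
        IsML φ ∧ IsML ψ ∧ IsML η ∧ IsML χ ∧
        lam φ = φ ∧ bH φ = 0 ∧ opN ψ = φ ∧ χ - lam χ = bP ψ ∧
        lam (χ' - χ - bH η) = χ' - χ - bH η) ∧
    -- injectivity, source degree 0
    (∀ (φ ψ : Cochain A 0) (χ : Cochain A 1),
      IsML φ → IsML ψ → IsML χ →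
      lam φ = φ → bH φ = 0 → opN ψ = φ → χ - lam χ = bP ψ →
      (∃ η : Cochain A 0, IsML η ∧ lam (χ - bH η) = χ - bH η) →
      φ = 0) ∧
    -- injectivity, source degree `n + 1`
    (∀ (n : ℕ) (φ ψ : Cochain A (n + 1)) (χ : Cochain A (n + 2)),
      IsML φ → IsML ψ → IsML χ →
      lam φ = φ → bH φ = 0 → opN ψ = φ → χ - lam χ = bP ψ →
      (∃ η : Cochain A (n + 1), IsML η ∧ lam (χ - bH η) = χ - bH η) →
      ∃ ξ : Cochain A n, IsML ξ ∧ lam ξ = ξ ∧ bH ξ = φ) := by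
  refine ⟨?_, ?_, ?_⟩
  · -- surjectivity
    intro n χ' hχ' hcyc
    have hθML : IsML (χ' - lam χ') := IsML_sub hχ' (IsML_lam hχ')
    have hbPθ : bP (χ' - lam χ') = 0 := by rw [← bH_sub_lam, hcyc, sub_self]
    have hb : bP (hmt (χ' - lam χ')) = χ' - lam χ' := by
      funext a
      have h := homotopy (χ' - lam χ') a
      rw [hbPθ, hmt_zero] at h
      simpa using h
    refine ⟨opN (hmt (χ' - lam χ')), hmt (χ' - lam χ'), 0, χ',
      IsML_opN (IsML_hmt hθML), IsML_hmt hθML, IsML_zero, hχ',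
      lam_opN _, ?_, rfl, hb.symm, ?_⟩
    · rw [bH_opN, hb, opN_sub, opN_lam, sub_self]
    · rw [bH_zero, sub_zero, sub_self, lam_zero]
  · -- injectivity, degree 0
    intro φ ψ χ _ _ _ _ _ hN hχ hex
    obtain ⟨η, _, hηc⟩ := hex
    have h1 : χ - lam χ = bP (η - lam η) := chi_eq χ η hηc
    have h2 : bP (ψ - (η - lam η)) = 0 := by rw [bP_sub, ← hχ, h1, sub_self]
    have h3 : ψ = η - lam η := sub_eq_zero.mp (deg0 _ h2)
    rw [← hN, h3, opN_sub, opN_lam, sub_self]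
  · -- injectivity, higher degree
    intro n φ ψ χ _ hψ _ _ _ hN hχ hex
    obtain ⟨η, hηML, hηc⟩ := hex
    have h1 : χ - lam χ = bP (η - lam η) := chi_eq χ η hηc
    have h2 : bP (ψ - (η - lam η)) = 0 := by rw [bP_sub, ← hχ, h1, sub_self]
    have hb : bP (hmt (ψ - (η - lam η))) = ψ - (η - lam η) := by
      funext a
      have h := homotopy (ψ - (η - lam η)) a
      rw [h2, hmt_zero] at h
      simpa using h
    refine ⟨opN (hmt (ψ - (η - lam η))),
      IsML_opN (IsML_hmt (IsML_sub hψ (IsML_sub hηML (IsML_lam hηML)))),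
      lam_opN _, ?_⟩
    rw [bH_opN, hb, opN_sub, opN_sub, opN_lam, sub_self, sub_zero, hN]


end NCG
end
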